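/- Let G be a group acting on a set M and let K : G → M → ℝ be a one-cocycle modulo constants. Then for any two basepoints x, y ∈ M the associated two-cocycles 𝔊_x and 𝔊_y differ by a coboundary: there exists b : G → ℝ (one may take b g := K g x − K g y) such that for all g, h ∈ G, 𝔊_y(g,h) − 𝔊_x(g,h) = b g + b h − b (g*h). (Hence the cohomology class of the Ismagilov–Losik–Michor cocycle does not depend on the choice of basepoint.) -/
import Mathlib

/-- For a one-cocycle modulo constants `K : G → M → ℝ`, the two-cocycles
`𝔊_x(g,h) := K g (h • x) − K g x` and `𝔊_y` associated to two basepoints `x, y ∈ M`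
differ by a coboundary; hence the cohomology class of the Ismagilov–Losik–Michor
cocycle does not depend on the choice of basepoint. -/
theorem ILM_class_independent_of_basepoint {G M : Type*} [Group G] [MulAction G M]
    (K : G → M → ℝ)
    (hK : ∀ g h : G, ∃ c : ℝ, ∀ y : M, K (g * h) y = K g (h • y) + K h y + c)
    (x y : M) :
    ∃ b : G → ℝ, ∀ g h : G,
      (K g (h • y) - K g y) - (K g (h • x) - K g x) = b g + b h - b (g * h) := by
  refine ⟨fun g => K g x - K g y, fun g h => ?_⟩
  obtain ⟨c, hc⟩ := hK g h
  have hx := hc x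
  have hy := hc y
  dsimp only
  linarith
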